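/- Let n ≥ 2 and let q be a quantizer on ℝⁿ over a probability space (Ω, 𝓕, P) that is unbiased and scale-invariant, and suppose there is a finite set G ⊂ ℝⁿ such that q(v, ω) ∈ G for every v with ‖v‖∞ = 1 and every ω ∈ Ω. Let μ be a probability measure on ℝⁿ that is absolutely continuous with respect to Lebesgue measure. Then for μ-almost every x ∈ ℝⁿ, one has x ≠ 0 and Var(q(x)) > 0; i.e., an input drawn from an absolutely continuous distribution almost surely incurs strictly positive quantization variance. -/

import Mathlib

open MeasureTheory

noncomputable def supNorm {n : ℕ} (x : EuclideanSpace ℝ (Fin n)) : ℝ :=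
  ‖(WithLp.equiv 2 (Fin n → ℝ)) x‖

noncomputable def qVar {n : ℕ} {Ω : Type*} [MeasurableSpace Ω] (P : Measure Ω)
    (q : EuclideanSpace ℝ (Fin n) → Ω → EuclideanSpace ℝ (Fin n))
    (x : EuclideanSpace ℝ (Fin n)) : ℝ :=
  ∫ ω, ‖q x ω - ∫ ω', q x ω' ∂P‖ ^ 2 ∂P

/-- For `n ≥ 2`, if `q` is an unbiased, scale-invariant quantizer whose outputs on the
sup-norm unit sphere lie on a finite grid `G`, then for an input `x` drawn from any
probability measure `μ` absolutely continuous with respect to Lebesgue measure,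
almost surely `x ≠ 0` and the quantization variance at `x` is strictly positive. -/
theorem quantizer_variance_pos_ae {n : ℕ} (hn : 2 ≤ n)
    {Ω : Type*} [MeasurableSpace Ω] (P : Measure Ω) [IsProbabilityMeasure P]
    (q : EuclideanSpace ℝ (Fin n) → Ω → EuclideanSpace ℝ (Fin n))
    (hmeas : Measurable (Function.uncurry q))
    (hunbiased : ∀ x, (∫ ω, q x ω ∂P) = x)
    (hscale : ∀ l : ℝ, 0 ≤ l → ∀ x ω, q (l • x) ω = l • q x ω)
    (G : Set (EuclideanSpace ℝ (Fin n))) (hGfin : G.Finite)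
    (hgrid : ∀ v, supNorm v = 1 → ∀ ω, q v ω ∈ G)
    (μ : Measure (EuclideanSpace ℝ (Fin n))) [IsProbabilityMeasure μ]
    (hac : μ ≪ volume) :
    ∀ᵐ x ∂μ, x ≠ 0 ∧ 0 < qVar P q x := by
  haveI : Nonempty (Fin n) := ⟨⟨0, by omega⟩⟩
  haveI : Nontrivial (EuclideanSpace ℝ (Fin n)) := by
    unfold EuclideanSpace PiLp; infer_instance
  apply hac.ae_le
  rw [mem_ae_iff, Set.compl_setOf]
  apply measure_mono_null (t := ({0} : Set (EuclideanSpace ℝ (Fin n))) ∪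
      ⋃ g ∈ G, (Submodule.span ℝ {g} : Set (EuclideanSpace ℝ (Fin n))))
  · intro x hx
    simp only [Set.mem_setOf_eq, not_and_or, not_ne_iff, not_lt] at hx
    by_cases hx0 : x = 0
    · exact Or.inl (by simp [hx0])
    have hvar : qVar P q x ≤ 0 := by tauto
    set s : ℝ := supNorm x with hs
    have hs0 : 0 < s := by
      rw [hs]
      unfold supNorm
      rw [norm_pos_iff]
      simpa using hx0
    set v : EuclideanSpace ℝ (Fin n) := s⁻¹ • x with hv
    have hxv : x = s • v := by
      rw [hv, smul_smul, mul_inv_cancel₀ hs0.ne', one_smul]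
    have hsv : supNorm v = 1 := by
      unfold supNorm
      rw [hv]
      rw [show (WithLp.equiv 2 (Fin n → ℝ)) (s⁻¹ • x) = s⁻¹ • (WithLp.equiv 2 (Fin n → ℝ)) x from rfl, norm_smul]
      rw [Real.norm_eq_abs, abs_of_pos (inv_pos.mpr hs0),
        show ‖(WithLp.equiv 2 (Fin n → ℝ)) x‖ = s from rfl, inv_mul_cancel₀ hs0.ne']
    have hq : ∀ ω, q x ω = s • q v ω := by
      intro ω
      rw [hxv]; exact hscale s hs0.le v ω
    -- measurability
    have hmx : Measurable (fun ω => q x ω) :=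
      hmeas.comp (measurable_const.prodMk measurable_id)
    have hmf : Measurable (fun ω => ‖q x ω - x‖ ^ 2) :=
      ((hmx.sub measurable_const).norm).pow_const 2
    -- boundedness
    obtain ⟨C, hC⟩ := (hGfin.image (fun g => ‖s • g - x‖ ^ 2)).bddAbove
    have hbound : ∀ ω, ‖q x ω - x‖ ^ 2 ≤ C := by
      intro ω
      rw [hq ω]
      exact hC ⟨q v ω, hgrid v hsv ω, rfl⟩
    have hint : Integrable (fun ω => ‖q x ω - x‖ ^ 2) P := by
      apply Integrable.mono' (integrable_const C) hmf.aestronglyMeasurable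
      filter_upwards with ω
      rw [Real.norm_eq_abs, abs_of_nonneg (by positivity)]
      exact hbound ω
    have hqVar : qVar P q x = ∫ ω, ‖q x ω - x‖ ^ 2 ∂P := by
      unfold qVar; rw [hunbiased x]
    have hzero : ∫ ω, ‖q x ω - x‖ ^ 2 ∂P = 0 :=
      le_antisymm (hqVar ▸ hvar) (integral_nonneg fun ω => by positivity)
    have hae := (integral_eq_zero_iff_of_nonneg (fun ω => by positivity) hint).mp hzero
    haveI : (ae P).NeBot := ae_neBot.mpr (IsProbabilityMeasure.ne_zero P)
    obtain ⟨ω, hω⟩ := hae.exists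
    have hxeq : x = s • q v ω := by
      have : ‖q x ω - x‖ ^ 2 = 0 := hω
      have h2 : q x ω = x := by
        rwa [pow_eq_zero_iff (by norm_num), norm_eq_zero, sub_eq_zero] at this
      rw [← h2, hq ω]
    refine Or.inr ?_
    rw [Set.mem_iUnion₂]
    refine ⟨q v ω, hgrid v hsv ω, ?_⟩
    rw [SetLike.mem_coe, Submodule.mem_span_singleton]
    exact ⟨s, hxeq.symm⟩
  · apply measure_union_null
    · rw [show ({0} : Set (EuclideanSpace ℝ (Fin n))) =
          ((⊥ : Submodule ℝ (EuclideanSpace ℝ (Fin n))) : Set _) by simp]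
      apply Measure.addHaar_submodule
      exact bot_ne_top
    · rw [measure_biUnion_null_iff hGfin.countable]
      intro g _
      apply Measure.addHaar_submodule
      intro h
      have h1 : Module.finrank ℝ (EuclideanSpace ℝ (Fin n)) = n :=
        finrank_euclideanSpace_fin
      by_cases hg : g = 0
      · rw [hg, Submodule.span_singleton_eq_bot.mpr rfl] at h
        exact bot_ne_top h
      · have := finrank_span_singleton (K := ℝ) hg
        rw [h, finrank_top, h1] at this
        omega
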